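/- Scaling equivariance of the polar map: if x_k solves (x_k - x₀)/(kh) = (1/(k+1)!)·K·𝖧(x₀,...,x_k,·) and λ₀,...,λ_{k-1} are nonzero scalars with λ₀λ₁···λ_{k-1} = 1, then λ₀x_k solves the same equation with data (λ₀x₀, λ₁x₁, ..., λ_{k-1}x_{k-1}). -/

import Mathlib

open Matrix

/-- scaling equivariance of the polar map: if `x_k` solves the polar
map equation and `λ₀⋯λ_{k-1} = 1`, then `λ₀ x_k` solves the equation with scaled
data `(λ₀x₀, …, λ_{k-1}x_{k-1})`. -/
theorem polar_map_scaling_equivariance (n k : ℕ) (hk : 1 ≤ k) (h : ℝ)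
    (Ht : MultilinearMap ℝ (fun _ : Fin (k + 2) => (Fin n → ℝ)) ℝ)
    (hsymm : ∀ (σ : Equiv.Perm (Fin (k + 2))) (y : Fin (k + 2) → (Fin n → ℝ)),
      Ht (y ∘ σ) = Ht y)
    (K : Matrix (Fin n) (Fin n) ℝ) (hK : Matrix.transpose K = -K)
    (x : Fin (k + 1) → (Fin n → ℝ))
    (heq : x (Fin.last k) - x 0 = ((k : ℝ) * h / ((k + 1).factorial : ℝ)) •
      K.mulVec (fun i => Ht (Fin.snoc x (Pi.single i 1))))
    (lam : Fin k → ℝ) (hlamne : ∀ m, lam m ≠ 0)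
    (hlam : ∏ m, lam m = 1)
    (x' : Fin (k + 1) → (Fin n → ℝ))
    (hx' : ∀ j : Fin (k + 1), x' j =
      if hj : (j : ℕ) < k then lam ⟨j, hj⟩ • x j else lam ⟨0, hk⟩ • x j) :
    x' (Fin.last k) - x' 0 = ((k : ℝ) * h / ((k + 1).factorial : ℝ)) •
      K.mulVec (fun i => Ht (Fin.snoc x' (Pi.single i 1))) := by
  set lam0 : ℝ := lam ⟨0, hk⟩ with hlam0
  -- scaling coefficients for the k+2 arguments
  set c : Fin (k + 2) → ℝ := Fin.snoc (Fin.snoc lam lam0) 1 with hc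
  have hcprod : ∏ j, c j = lam0 := by
    rw [hc, Fin.prod_univ_castSucc]
    simp [Fin.prod_univ_castSucc, hlam]
  have hx'scale : ∀ j : Fin (k + 1), x' j = c j.castSucc • x j := by
    intro j
    rw [hx' j, hc, Fin.snoc_castSucc]
    rcases lt_or_ge (j : ℕ) k with hj | hj
    · rw [dif_pos hj]
      have hsn : Fin.snoc (α := fun _ => ℝ) lam lam0 j = lam ⟨j, hj⟩ := by
        simp only [Fin.snoc, hj, dif_pos, cast_eq]
        rfl
      rw [hsn]
    · rw [dif_neg (not_lt.mpr hj)]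
      have : j = Fin.last k := by
        ext; exact le_antisymm (Nat.lt_succ_iff.mp j.isLt) hj
      rw [this]
      simp
  have hHt : ∀ i : Fin n, Ht (Fin.snoc x' (Pi.single i 1)) =
      lam0 * Ht (Fin.snoc x (Pi.single i 1)) := by
    intro i
    have harg : (Fin.snoc x' (Pi.single i 1) : Fin (k+2) → Fin n → ℝ) =
        fun j => c j • Fin.snoc x (Pi.single i 1) j := by
      funext j
      refine Fin.lastCases ?_ ?_ j
      · simp [hc]
      · intro m
        simp only [Fin.snoc_castSucc]
        exact hx'scale m
    rw [harg, Ht.map_smul_univ, hcprod]; rfl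
  have hfun : (fun i => Ht (Fin.snoc x' (Pi.single i 1))) =
      lam0 • (fun i => Ht (Fin.snoc x (Pi.single i 1))) := by
    funext i; rw [hHt i, Pi.smul_apply]; rfl
  have hlast : x' (Fin.last k) = lam0 • x (Fin.last k) := by
    rw [hx']
    rw [dif_neg (by simp)]
  have h0 : x' 0 = lam0 • x 0 := by
    rw [hx']
    simp only [Fin.val_zero]
    exact dif_pos (show 0 < k from hk)
  rw [hlast, h0, hfun, ← smul_sub, heq, mulVec_smul, smul_comm]
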